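/- Let G and H be vertex-disjoint connected multigraphs with distinct vertices u_1,…,u_k in G and v_1,…,v_k in H. For a partition P = {P_1,…,P_r} of [k], let G(P) be obtained from G by identifying, for each j, all vertices {u_i : i ∈ P_j} to a single vertex, and define H(P) analogously. If T_{G(P)} = T_{H(P)} for every partition P of [k], then for every multigraph W with distinct vertices w_1,…,w_k, the gluing of G to W along (u_i ↦ w_i) and the gluing of H to W along (v_i ↦ w_i) have equal Tutte polynomials. -/

import Mathlib

open scoped BigOperators
open MvPolynomial

attribute [local instance] Classical.propDecidable

/-- A multigraph: finite vertex and edge types, each edge has an unordered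
pair of endpoints (loops and parallel edges allowed). -/
structure Multigraph where
  V : Type
  E : Type
  [fintypeV : Fintype V]
  [fintypeE : Fintype E]
  [decEqV : DecidableEq V]
  [decEqE : DecidableEq E]
  ends : E → Sym2 V

attribute [instance] Multigraph.fintypeV Multigraph.fintypeE
  Multigraph.decEqV Multigraph.decEqE

noncomputable instance quotSetoidFintype {α : Type} [Fintype α] (s : Setoid α) :
    Fintype (Quotient s) := by classical exact Quotient.fintype s

noncomputable instance connCompFintype {α : Type} [Fintype α] (G : SimpleGraph α) :
    Fintype G.ConnectedComponent := by
  classical exact Fintype.ofSurjective G.connectedComponentMk fun c => c.exists_rep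

namespace Multigraph

variable (G : Multigraph)

/-- The simple graph induced by a set of edges `A` (parallel edges and loops
do not affect connectivity). -/
def spanning (A : Finset G.E) : SimpleGraph G.V :=
  SimpleGraph.fromRel (fun a b => ∃ e ∈ A, G.ends e = s(a, b))

/-- number of connected components of the spanning subgraph `(V, A)` -/
noncomputable def comps (A : Finset G.E) : ℕ :=
  Nat.card (G.spanning A).ConnectedComponent

/-- rank of an edge subset: `|V| - c(A)` -/
noncomputable def rk (A : Finset G.E) : ℕ :=
  Fintype.card G.V - G.comps A

/-- The Tutte polynomial, as a polynomial in the variables `X 0 = x`, `X 1 = y`. -/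
noncomputable def tutte : MvPolynomial (Fin 2) ℤ :=
  ∑ A : Finset G.E,
    (X 0 - 1) ^ (G.rk Finset.univ - G.rk A) * (X 1 - 1) ^ (A.card - G.rk A)

def Connected : Prop := (G.spanning Finset.univ).Connected

def IsLoop (e : G.E) : Prop := (G.ends e).IsDiag

def IsBridge (e : G.E) : Prop :=
  G.comps (Finset.univ.erase e) ≠ G.comps Finset.univ

noncomputable def numLoops : ℕ := Nat.card {e : G.E // (G.ends e).IsDiag}

/-- delete a set of edges -/
def deleteSet (F : Finset G.E) : Multigraph where
  V := G.V
  E := {e : G.E // e ∉ F}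
  ends := fun e => G.ends e.1

/-- delete one edge -/
def delete (e : G.E) : Multigraph := G.deleteSet {e}

/-- identify vertices along (the equivalence generated by) a relation `r` -/
noncomputable def identify (r : G.V → G.V → Prop) : Multigraph where
  V := Quotient (Relation.EqvGen.setoid r)
  E := G.E
  decEqV := Classical.decEq _
  ends := fun e => (G.ends e).map (Quotient.mk (Relation.EqvGen.setoid r))

/-- contract an edge: delete it and identify its two endpoints -/
noncomputable def contract (e : G.E) : Multigraph :=
  (G.delete e).identify (fun a b => a ∈ G.ends e ∧ b ∈ G.ends e)

/-- the projection of a vertex of `G` to a vertex of `G/e` -/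
noncomputable def cmk (e : G.E) : G.V → (G.contract e).V := fun v => Quotient.mk _ v

/-- restrict to the edges satisfying `P` (all vertices are kept) -/
noncomputable def edgeRestrict (P : G.E → Prop) : Multigraph where
  V := G.V
  E := {e : G.E // P e}
  ends := fun e => G.ends e.1

/-- add new edges indexed by `n` with prescribed endpoints -/
def addEdges (n : Type) [Fintype n] [DecidableEq n] (f : n → Sym2 G.V) :
    Multigraph where
  V := G.V
  E := G.E ⊕ n
  ends := Sum.elim G.ends f

/-- disjoint union -/
def disjUnion (H : Multigraph) : Multigraph where
  V := G.V ⊕ H.V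
  E := G.E ⊕ H.E
  ends := Sum.elim (fun e => (G.ends e).map Sum.inl) (fun e => (H.ends e).map Sum.inr)

/-- the gluing `G(u_1,…,u_k) ⊔ H(w_1,…,w_k)`: disjoint union with `u i`
identified with `w i` for each `i` -/
noncomputable def glue (H : Multigraph) {k : ℕ} (u : Fin k → G.V) (w : Fin k → H.V) :
    Multigraph :=
  (G.disjUnion H).identify
    (fun a b => ∃ i : Fin k, a = Sum.inl (u i) ∧ b = Sum.inr (w i))

/-- projection from `G.V ⊕ H.V` to the vertices of the gluing -/
noncomputable def glueMk (H : Multigraph) {k : ℕ} (u : Fin k → G.V) (w : Fin k → H.V) :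
    G.V ⊕ H.V → (G.glue H u w).V := fun a => Quotient.mk _ a

end Multigraph

/-- `σ` is an isomorphism of multigraphs: a vertex bijection preserving
edge multiplicities between every pair of vertices. -/
def Multigraph.IsIsoMap (G H : Multigraph) (σ : G.V ≃ H.V) : Prop :=
  ∀ p : Sym2 G.V,
    Nat.card {e : G.E // G.ends e = p} = Nat.card {e : H.E // H.ends e = p.map σ}

/-- `G` and `H` are isomorphic multigraphs -/
def Multigraph.Iso (G H : Multigraph) : Prop := ∃ σ : G.V ≃ H.V, G.IsIsoMap H σ

/-- `σ` is an automorphism of `G` -/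
def Multigraph.IsAuto (G : Multigraph) (σ : G.V ≃ G.V) : Prop := G.IsIsoMap G σ

/-- `Q` is a partition of the type `α` -/
def IsPartitionUniv {α : Type} (Q : Finset (Finset α)) : Prop :=
  (∀ B ∈ Q, B.Nonempty) ∧ ∀ i : α, ∃! B, B ∈ Q ∧ i ∈ B
namespace StmtAux
open SimpleGraph

variable {V ι : Type}

/-- the setoid on marker indices: i ~ j iff m i and m j are reachable -/
def mpi (S : SimpleGraph V) (m : ι → V) : Setoid ι := Setoid.comap m S.reachableSetoid

lemma mpi_rel (S : SimpleGraph V) (m : ι → V) (i j : ι) :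
    mpi S m i j ↔ S.Reachable (m i) (m j) := Iff.rfl

/-- a connected component is "marked" if it contains some marker vertex -/
def Marked (S : SimpleGraph V) (m : ι → V) (c : S.ConnectedComponent) : Prop :=
  ∃ i, S.connectedComponentMk (m i) = c

noncomputable def markedEquiv (S : SimpleGraph V) (m : ι → V) :
    Quotient (mpi S m) ≃ {c : S.ConnectedComponent // Marked S m c} := by
  refine Equiv.ofBijective
    (Quotient.lift (fun i => (⟨S.connectedComponentMk (m i), i, rfl⟩ :
      {c : S.ConnectedComponent // Marked S m c}))
      (fun i j h => Subtype.ext (ConnectedComponent.sound h))) ⟨?_, ?_⟩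
  · rintro ⟨i⟩ ⟨j⟩ h
    exact Quotient.sound (ConnectedComponent.exact (congrArg Subtype.val h))
  · rintro ⟨c, i, hi⟩
    exact ⟨⟦i⟧, Subtype.ext hi⟩

lemma card_cc_decomp [Fintype V] (S : SimpleGraph V) (m : ι → V) :
    Nat.card S.ConnectedComponent =
      Nat.card {c : S.ConnectedComponent // ¬ Marked S m c} +
        Nat.card (Quotient (mpi S m)) := by
  classical
  have e : {c : S.ConnectedComponent // Marked S m c} ⊕
      {c : S.ConnectedComponent // ¬ Marked S m c} ≃ S.ConnectedComponent :=
    Equiv.sumCompl _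
  have h1 := Nat.card_congr e
  have h2 := Nat.card_congr (markedEquiv S m)
  have : Finite {c : S.ConnectedComponent // Marked S m c} := Subtype.finite
  have : Finite {c : S.ConnectedComponent // ¬ Marked S m c} := Subtype.finite
  rw [Nat.card_sum] at h1
  omega

end StmtAux
namespace StmtAux
open SimpleGraph

variable {V ι : Type}

lemma reach_mono {S S' : SimpleGraph V} (h : ∀ a b, S.Adj a b → S'.Reachable a b)
    {x y : V} (hr : S.Reachable x y) : S'.Reachable x y := by
  obtain ⟨p⟩ := hr
  induction p with
  | nil => exact Reachable.refl _
  | cons ha _ ih => exact (h _ _ ha).trans ih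

/-- map on connected components induced by a reachability-nondecreasing change -/
noncomputable def ccMap {S S' : SimpleGraph V} (h : ∀ a b, S.Adj a b → S'.Reachable a b) :
    S.ConnectedComponent → S'.ConnectedComponent :=
  Quot.lift S'.connectedComponentMk
    (fun _ _ hr => ConnectedComponent.sound (reach_mono h hr))

lemma ccMap_mk {S S' : SimpleGraph V} (h : ∀ a b, S.Adj a b → S'.Reachable a b) (x : V) :
    ccMap h (S.connectedComponentMk x) = S'.connectedComponentMk x := rfl

lemma ccMap_surjective {S S' : SimpleGraph V} (h : ∀ a b, S.Adj a b → S'.Reachable a b) :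
    Function.Surjective (ccMap h) := by
  intro c
  obtain ⟨x, rfl⟩ := c.exists_rep
  exact ⟨S.connectedComponentMk x, rfl⟩

lemma card_cc_le_of_le [Fintype V] {S S' : SimpleGraph V}
    (h : ∀ a b, S.Adj a b → S'.Reachable a b) :
    Nat.card S'.ConnectedComponent ≤ Nat.card S.ConnectedComponent :=
  Nat.card_le_card_of_surjective _ (ccMap_surjective h)

lemma card_cc_le_card_vert [Fintype V] (S : SimpleGraph V) :
    Nat.card S.ConnectedComponent ≤ Fintype.card V := by
  rw [← Nat.card_eq_fintype_card]
  exact Nat.card_le_card_of_surjective S.connectedComponentMk (fun c => c.exists_rep)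

lemma card_cc_bot [Fintype V] :
    Nat.card (⊥ : SimpleGraph V).ConnectedComponent = Fintype.card V := by
  rw [← Nat.card_eq_fintype_card]
  refine (Nat.card_congr (Equiv.ofBijective (⊥ : SimpleGraph V).connectedComponentMk
    ⟨fun a b hab => ?_, fun c => c.exists_rep⟩)).symm
  exact reachable_bot.mp (ConnectedComponent.exact hab)

lemma quot_mpi_le_cc [Fintype V] (S : SimpleGraph V) (m : ι → V) :
    Nat.card (Quotient (mpi S m)) ≤ Nat.card S.ConnectedComponent := by
  classical
  have : Finite {c : S.ConnectedComponent // Marked S m c} := Subtype.finite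
  calc Nat.card (Quotient (mpi S m)) = Nat.card {c : S.ConnectedComponent // Marked S m c} :=
        Nat.card_congr (markedEquiv S m)
    _ ≤ Nat.card S.ConnectedComponent := Nat.card_le_card_of_injective _ Subtype.val_injective

lemma reach_cases {S S' : SimpleGraph V} {a₀ b₀ : V}
    (hAdj : ∀ x y, S'.Adj x y → S.Adj x y ∨ (x = a₀ ∧ y = b₀) ∨ (x = b₀ ∧ y = a₀))
    {x y : V} (h : S'.Reachable x y) :
    S.Reachable x y ∨
      ((S.Reachable x a₀ ∨ S.Reachable x b₀) ∧ (S.Reachable y a₀ ∨ S.Reachable y b₀)) := by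
  obtain ⟨p⟩ := h
  induction p with
  | nil => exact Or.inl (Reachable.refl _)
  | @cons x z y hxz p ih =>
    rcases hAdj _ _ hxz with hS | ⟨rfl, rfl⟩ | ⟨rfl, rfl⟩
    · rcases ih with h1 | ⟨hz, hy⟩
      · exact Or.inl (hS.reachable.trans h1)
      · refine Or.inr ⟨?_, hy⟩
        rcases hz with h2 | h2
        · exact Or.inl (hS.reachable.trans h2)
        · exact Or.inr (hS.reachable.trans h2)
    · refine Or.inr ⟨Or.inl (Reachable.refl _), ?_⟩
      rcases ih with h1 | ⟨_, hy⟩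
      · exact Or.inr h1.symm
      · exact hy
    · refine Or.inr ⟨Or.inr (Reachable.refl _), ?_⟩
      rcases ih with h1 | ⟨_, hy⟩
      · exact Or.inl h1.symm
      · exact hy

lemma card_cc_le_succ [Fintype V] {S S' : SimpleGraph V} {a₀ b₀ : V}
    (hle : ∀ a b, S.Adj a b → S'.Reachable a b)
    (hAdj : ∀ x y, S'.Adj x y → S.Adj x y ∨ (x = a₀ ∧ y = b₀) ∨ (x = b₀ ∧ y = a₀)) :
    Nat.card S.ConnectedComponent ≤ Nat.card S'.ConnectedComponent + 1 := by
  classical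
  have key : Function.Injective (fun c : S.ConnectedComponent =>
      if c = S.connectedComponentMk a₀ then (Sum.inr () : S'.ConnectedComponent ⊕ Unit)
      else Sum.inl (ccMap hle c)) := by
    intro c1 c2 hc
    simp only at hc
    by_cases h1 : c1 = S.connectedComponentMk a₀ <;>
      by_cases h2 : c2 = S.connectedComponentMk a₀
    · exact h1.trans h2.symm
    · rw [if_pos h1, if_neg h2] at hc; exact absurd hc.symm Sum.inl_ne_inr
    · rw [if_neg h1, if_pos h2] at hc; exact absurd hc Sum.inl_ne_inr
    · rw [if_neg h1, if_neg h2, Sum.inl.injEq] at hc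
      obtain ⟨x, rfl⟩ := c1.exists_rep
      obtain ⟨y, rfl⟩ := c2.exists_rep
      have hr : S'.Reachable x y := ConnectedComponent.exact hc
      rcases reach_cases hAdj hr with h | ⟨hx, hy⟩
      · exact ConnectedComponent.sound h
      · rcases hx with hx | hx
        · exact absurd (ConnectedComponent.sound hx) h1
        rcases hy with hy | hy
        · exact absurd (ConnectedComponent.sound hy) h2
        · exact (ConnectedComponent.sound hx).trans (ConnectedComponent.sound hy).symm
  calc Nat.card S.ConnectedComponent ≤ Nat.card (S'.ConnectedComponent ⊕ Unit) :=
        Nat.card_le_card_of_injective _ key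
    _ = Nat.card S'.ConnectedComponent + 1 := by simp [Nat.card_sum]

end StmtAux
namespace StmtAux
open SimpleGraph

lemma sym2_exists_rep {α : Type} (z : Sym2 α) : ∃ x y, z = s(x, y) := by
  induction z using Sym2.ind with
  | _ x y => exact ⟨x, y, rfl⟩

lemma spanning_adj (G : Multigraph) (A : Finset G.E) (a b : G.V) :
    (G.spanning A).Adj a b ↔ a ≠ b ∧ ∃ e ∈ A, G.ends e = s(a, b) := by
  rw [Multigraph.spanning, SimpleGraph.fromRel_adj]
  refine and_congr_right fun _ => ⟨?_, fun h => Or.inl h⟩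
  rintro (h | ⟨e, he, hee⟩)
  · exact h
  · exact ⟨e, he, hee.trans (Sym2.eq_swap)⟩

lemma comps_empty (G : Multigraph) : G.comps ∅ = Fintype.card G.V := by
  have hbot : G.spanning ∅ = ⊥ := by
    ext a b
    simp [spanning_adj]
  rw [Multigraph.comps, hbot, card_cc_bot]

lemma comps_le_card (G : Multigraph) (A : Finset G.E) : G.comps A ≤ Fintype.card G.V :=
  card_cc_le_card_vert _

lemma spanning_adj_mono (G : Multigraph) {A B : Finset G.E} (hAB : A ⊆ B) {a b : G.V}
    (h : (G.spanning A).Adj a b) : (G.spanning B).Adj a b := by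
  rw [spanning_adj] at h ⊢
  obtain ⟨hne, e, he, hee⟩ := h
  exact ⟨hne, e, hAB he, hee⟩

lemma comps_mono (G : Multigraph) {A B : Finset G.E} (hAB : A ⊆ B) :
    G.comps B ≤ G.comps A :=
  card_cc_le_of_le (fun _ _ h => (spanning_adj_mono G hAB h).reachable)

lemma card_le_card_add_comps (G : Multigraph) (A : Finset G.E) :
    Fintype.card G.V ≤ A.card + G.comps A := by
  classical
  induction A using Finset.induction_on with
  | empty => simp [comps_empty]
  | @insert a s ha ih =>
    obtain ⟨a₀, b₀, hab⟩ := sym2_exists_rep (G.ends a)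
    have hss : s ⊆ insert a s := Finset.subset_insert a s
    have hstep : G.comps s ≤ G.comps (insert a s) + 1 := by
      refine card_cc_le_succ (S' := G.spanning (insert a s)) (a₀ := a₀) (b₀ := b₀)
        (fun x y h => (spanning_adj_mono G hss h).reachable) ?_
      intro x y h
      rw [spanning_adj] at h
      obtain ⟨hne, e, he, hee⟩ := h
      rcases Finset.mem_insert.mp he with rfl | hes
      · rw [hab] at hee
        rcases Sym2.eq_iff.mp hee with ⟨rfl, rfl⟩ | ⟨rfl, rfl⟩
        · exact Or.inr (Or.inl ⟨rfl, rfl⟩)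
        · exact Or.inr (Or.inr ⟨rfl, rfl⟩)
      · exact Or.inl ((spanning_adj G s x y).mpr ⟨hne, e, hes, hee⟩)
    rw [Finset.card_insert_of_notMem ha]
    omega

lemma quot_mpi_le_comps {ι : Type} (G : Multigraph) (A : Finset G.E) (m : ι → G.V) :
    Nat.card (Quotient (mpi (G.spanning A) m)) ≤ G.comps A :=
  quot_mpi_le_cc _ m

end StmtAux
namespace StmtAux
open SimpleGraph

lemma reach_map_general {V V' : Type} {S : SimpleGraph V} {S' : SimpleGraph V'} (f : V → V')
    (h : ∀ a b, S.Adj a b → S'.Reachable (f a) (f b)) {x y : V} (hr : S.Reachable x y) :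
    S'.Reachable (f x) (f y) := by
  obtain ⟨p⟩ := hr
  induction p with
  | nil => exact Reachable.refl _
  | cons ha _ ih => exact (h _ _ ha).trans ih

section Master

variable {ι : Type} (G : Multigraph) (m : ι → G.V) (ρ : ι → ι → Prop)
  (r : G.V → G.V → Prop)
  (hr : ∀ a b, r a b ↔ ∃ i j, ρ i j ∧ a = m i ∧ b = m j)
  (A : Finset G.E)

/-- the identified multigraph -/
noncomputable def idG : Multigraph := G.identify r

/-- projection to the identified vertices -/
def qmk : G.V → (idG G r).V := Quotient.mk (Relation.EqvGen.setoid r)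

/-- spanning subgraph of the identified graph -/
noncomputable def spanId : SimpleGraph (idG G r).V := (idG G r).spanning A

/-- the join setoid -/
def J2 : Setoid ι := mpi (G.spanning A) m ⊔ Relation.EqvGen.setoid ρ

lemma mpi_le_J2 : mpi (G.spanning A) m ≤ J2 G m ρ A := le_sup_left
lemma eqv_le_J2 : Relation.EqvGen.setoid ρ ≤ J2 G m ρ A := le_sup_right

/-- the closed form for reachability in the identified graph -/
def KRel : G.V → G.V → Prop := fun x y =>
  (G.spanning A).Reachable x y ∨
    ∃ i j, (G.spanning A).Reachable x (m i) ∧ J2 G m ρ A i j ∧ (G.spanning A).Reachable (m j) y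

lemma KRel_equiv : Equivalence (KRel G m ρ A) := by
  constructor
  · exact fun x => Or.inl (Reachable.refl x)
  · rintro x y (h | ⟨i, j, h1, h2, h3⟩)
    · exact Or.inl h.symm
    · exact Or.inr ⟨j, i, h3.symm, Setoid.symm' _ h2, h1.symm⟩
  · rintro x y z (h | ⟨i, j, h1, h2, h3⟩) (h' | ⟨i', j', h1', h2', h3'⟩)
    · exact Or.inl (h.trans h')
    · exact Or.inr ⟨i', j', h.trans h1', h2', h3'⟩
    · exact Or.inr ⟨i, j, h1, h2, h3.trans h'⟩
    · refine Or.inr ⟨i, j', h1, ?_, h3'⟩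
      have hmid : J2 G m ρ A j i' := mpi_le_J2 G m ρ A (h3.trans h1')
      exact Setoid.trans' _ h2 (Setoid.trans' _ hmid h2')

/-- `KRel` as a setoid -/
def KSetoid : Setoid G.V := ⟨KRel G m ρ A, KRel_equiv G m ρ A⟩

lemma reach_map {x y : G.V} (hrch : (G.spanning A).Reachable x y) :
    (spanId G r A).Reachable (qmk G r x) (qmk G r y) := by
  refine reach_map_general _ (fun a b hab => ?_) hrch
  rw [spanning_adj] at hab
  obtain ⟨hne, e, he, hee⟩ := hab
  by_cases hq : qmk G r a = qmk G r b
  · exact hq ▸ Reachable.refl _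
  · refine Adj.reachable ?_
    refine (spanning_adj (idG G r) A _ _).mpr ?_
    refine ⟨hq, e, he, ?_⟩
    show (G.ends e).map _ = _
    rw [hee, Sym2.map_pair_eq]
    rfl

include hr in
lemma hop {i j : ι} (h : J2 G m ρ A i j) :
    (spanId G r A).Reachable (qmk G r (m i)) (qmk G r (m j)) := by
  set f : ι → (spanId G r A).ConnectedComponent := fun i =>
    (spanId G r A).connectedComponentMk (qmk G r (m i)) with hf
  have hker : J2 G m ρ A ≤ Setoid.ker f := by
    refine sup_le ?_ ?_
    · intro a b hab
      exact ConnectedComponent.sound (reach_map G r A hab)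
    · refine Setoid.eqvGen_le fun a b hab => ?_
      have hq : qmk G r (m a) = qmk G r (m b) :=
        Quot.sound (Relation.EqvGen.rel _ _ ((hr _ _).mpr ⟨a, b, hab, rfl, rfl⟩))
      show f a = f b
      rw [hf]; simp only [hq]
  exact ConnectedComponent.exact (hker h)

include hr in
lemma krel_of_eqvgen {a b : G.V} (h : Relation.EqvGen r a b) :
    KRel G m ρ A a b := by
  have hle : Relation.EqvGen.setoid r ≤ KSetoid G m ρ A := by
    refine Setoid.eqvGen_le fun x y hxy => ?_
    obtain ⟨i, j, hij, rfl, rfl⟩ := (hr x y).mp hxy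
    exact Or.inr ⟨i, j, Reachable.refl _,
      eqv_le_J2 G m ρ A (Relation.EqvGen.rel i j hij), Reachable.refl _⟩
  exact hle h

include hr in
lemma krel_of_qeq {a b : G.V} (h : qmk G r a = qmk G r b) :
    KRel G m ρ A a b :=
  krel_of_eqvgen G m ρ r hr A (Quotient.exact h)

lemma adj_decomp {x' y' : (idG G r).V} (h : (spanId G r A).Adj x' y') :
    ∃ c d : G.V, qmk G r c = x' ∧ qmk G r d = y' ∧ (G.spanning A).Adj c d := by
  replace h := (spanning_adj (idG G r) A x' y').mp h
  obtain ⟨hne, e, he, hee⟩ := h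
  obtain ⟨c₀, d₀, hcd⟩ := sym2_exists_rep (G.ends e)
  have hmap : (idG G r).ends e = s(qmk G r c₀, qmk G r d₀) := by
    show (G.ends e).map _ = _
    rw [hcd, Sym2.map_pair_eq]
    rfl
  rw [hmap] at hee
  have hne' : c₀ ≠ d₀ := by
    rintro rfl
    rcases Sym2.eq_iff.mp hee with ⟨h1, h2⟩ | ⟨h1, h2⟩ <;> exact hne (h1.symm ▸ h2.symm ▸ rfl)
  rcases Sym2.eq_iff.mp hee with ⟨h1, h2⟩ | ⟨h1, h2⟩
  · exact ⟨c₀, d₀, h1, h2, (spanning_adj G A c₀ d₀).mpr ⟨hne', e, he, hcd⟩⟩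
  · exact ⟨d₀, c₀, h2, h1, (spanning_adj G A d₀ c₀).mpr
      ⟨hne'.symm, e, he, hcd.trans Sym2.eq_swap⟩⟩

include hr in
lemma reach_down {x y : G.V} (h : (spanId G r A).Reachable (qmk G r x) (qmk G r y)) :
    KRel G m ρ A x y := by
  suffices H : ∀ (x' y' : (idG G r).V), (spanId G r A).Walk x' y' →
      ∀ x y : G.V, qmk G r x = x' → qmk G r y = y' → KRel G m ρ A x y by
    obtain ⟨p⟩ := h
    exact H _ _ p x y rfl rfl
  intro x' y' p
  induction p with
  | nil => exact fun x y hx hy => krel_of_qeq G m ρ r hr A (hx.trans hy.symm)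
  | @cons x' z' y' hadj p ih =>
    intro x y hx hy
    obtain ⟨c, d, hc, hd, hcd⟩ := adj_decomp G r A hadj
    have k1 : KRel G m ρ A x c := krel_of_qeq G m ρ r hr A (hx.trans hc.symm)
    have k2 : KRel G m ρ A c d := Or.inl hcd.reachable
    have k3 : KRel G m ρ A d y := ih d y hd hy
    exact (KRel_equiv G m ρ A).trans ((KRel_equiv G m ρ A).trans k1 k2) k3

include hr in
lemma reach_up {x y : G.V} (h : KRel G m ρ A x y) :
    (spanId G r A).Reachable (qmk G r x) (qmk G r y) := by
  rcases h with h | ⟨i, j, h1, h2, h3⟩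
  · exact reach_map G r A h
  · exact ((reach_map G r A h1).trans (hop G m ρ r hr A h2)).trans (reach_map G r A h3)

include hr in
lemma reach_iff_krel {x y : G.V} :
    (spanId G r A).Reachable (qmk G r x) (qmk G r y) ↔ KRel G m ρ A x y :=
  ⟨reach_down G m ρ r hr A, reach_up G m ρ r hr A⟩

include hr in
lemma mpi_up : mpi (spanId G r A) (fun i => qmk G r (m i)) = J2 G m ρ A := by
  apply Setoid.ext
  intro i j
  rw [mpi_rel, reach_iff_krel G m ρ r hr A]
  constructor
  · rintro (h | ⟨i', j', h1, h2, h3⟩)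
    · exact mpi_le_J2 G m ρ A h
    · have ha : J2 G m ρ A i i' := mpi_le_J2 G m ρ A h1
      have hb : J2 G m ρ A j' j := mpi_le_J2 G m ρ A h3
      exact Setoid.trans' _ (Setoid.trans' _ ha h2) hb
  · intro h
    exact Or.inr ⟨i, j, Reachable.refl _, h, Reachable.refl _⟩

/-- the component projection map -/
noncomputable def phiMap : (G.spanning A).ConnectedComponent →
    (spanId G r A).ConnectedComponent :=
  Quot.lift (fun x => (spanId G r A).connectedComponentMk (qmk G r x))
    (fun _ _ hrch => ConnectedComponent.sound (reach_map G r A hrch))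

lemma krel_marked {x : G.V} {i : ι} (h : KRel G m ρ A (m i) x) :
    ∃ i₀, (G.spanning A).Reachable (m i₀) x := by
  rcases h with h | ⟨_, j', _, _, h3⟩
  · exact ⟨i, h⟩
  · exact ⟨j', h3⟩

include hr in
lemma unmarked_bij :
    Nat.card {c : (G.spanning A).ConnectedComponent // ¬ Marked (G.spanning A) m c} =
      Nat.card {c : (spanId G r A).ConnectedComponent //
        ¬ Marked (spanId G r A) (fun i => qmk G r (m i)) c} := by
  refine Nat.card_congr (Equiv.ofBijective (fun c => ⟨phiMap G r A c.1, ?_⟩) ⟨?_, ?_⟩)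
  · obtain ⟨c, hc⟩ := c
    obtain ⟨x, rfl⟩ := c.exists_rep
    rintro ⟨i, hi⟩
    have hrch : (spanId G r A).Reachable (qmk G r (m i)) (qmk G r x) :=
      ConnectedComponent.exact hi
    obtain ⟨i₀, hi₀⟩ := krel_marked G m ρ A (reach_down G m ρ r hr A hrch)
    exact hc ⟨i₀, ConnectedComponent.sound hi₀⟩
  · rintro ⟨c1, hc1⟩ ⟨c2, hc2⟩ hc
    obtain ⟨x, rfl⟩ := c1.exists_rep
    obtain ⟨y, rfl⟩ := c2.exists_rep
    simp only [Subtype.mk.injEq] at hc ⊢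
    have hrch : (spanId G r A).Reachable (qmk G r x) (qmk G r y) :=
      ConnectedComponent.exact hc
    rcases reach_down G m ρ r hr A hrch with h | ⟨i, j, h1, _, _⟩
    · exact Subtype.ext (Quot.sound h)
    · exact absurd ⟨i, ConnectedComponent.sound h1.symm⟩ hc1
  · rintro ⟨c', hc'⟩
    obtain ⟨z, rfl⟩ := c'.exists_rep
    obtain ⟨x, rfl⟩ : ∃ x, qmk G r x = z := Quotient.exists_rep z
    refine ⟨⟨(G.spanning A).connectedComponentMk x, ?_⟩, rfl⟩
    rintro ⟨i, hi⟩
    refine hc' ⟨i, ?_⟩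
    exact ConnectedComponent.sound (reach_map G r A (ConnectedComponent.exact hi))

include hr in
/-- The master counting lemma -/
lemma master [Fintype ι] :
    (G.identify r).comps A + Nat.card (Quotient (mpi (G.spanning A) m)) =
      G.comps A + Nat.card (Quotient (J2 G m ρ A)) := by
  have h1 := card_cc_decomp (spanId G r A) (fun i => qmk G r (m i))
  have h2 := card_cc_decomp (G.spanning A) m
  rw [mpi_up G m ρ r hr A] at h1
  have h3 := unmarked_bij G m ρ r hr A
  have hc : (G.identify r).comps A = Nat.card (spanId G r A).ConnectedComponent := rfl
  have hc2 : G.comps A = Nat.card (G.spanning A).ConnectedComponent := rfl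
  omega

end Master
end StmtAux
namespace StmtAux
open SimpleGraph

section Bot

variable {ι : Type} [Fintype ι]

lemma spanning_empty (G : Multigraph) : G.spanning (∅ : Finset G.E) = ⊥ := by
  ext a b
  simp [spanning_adj]

lemma card_quot_bot : Nat.card (Quotient (⊥ : Setoid ι)) = Fintype.card ι := by
  rw [← Nat.card_eq_fintype_card]
  refine (Nat.card_congr (Equiv.ofBijective (Quotient.mk ⊥) ⟨fun a b hab => ?_, fun c =>
    Quotient.exists_rep c⟩)).symm
  exact Quotient.exact hab

omit [Fintype ι] in
lemma mpi_empty (G : Multigraph) {m : ι → G.V} (hm : Function.Injective m) :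
    mpi (G.spanning (∅ : Finset G.E)) m = ⊥ := by
  apply Setoid.ext
  intro i j
  rw [mpi_rel, spanning_empty, reachable_bot,
    show ⇑(⊥ : Setoid ι) = (· = ·) from Setoid.bot_def]
  exact ⟨fun hh => hm hh, fun hh => hh ▸ rfl⟩

end Bot

section DisjU

variable (G W : Multigraph) (A : Finset (G.disjUnion W).E)

/-- the G-part of an edge set of the disjoint union -/
noncomputable def prL : Finset G.E :=
  (A : Finset (G.E ⊕ W.E)).preimage Sum.inl Sum.inl_injective.injOn

noncomputable def prR : Finset W.E :=
  (A : Finset (G.E ⊕ W.E)).preimage Sum.inr Sum.inr_injective.injOn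

lemma mem_prL (e : G.E) : e ∈ prL G W A ↔ (Sum.inl e : G.E ⊕ W.E) ∈ A :=
  Finset.mem_preimage

lemma mem_prR (e : W.E) : e ∈ prR G W A ↔ (Sum.inr e : G.E ⊕ W.E) ∈ A :=
  Finset.mem_preimage

lemma du_adj (x y : (G.disjUnion W).V) :
    ((G.disjUnion W).spanning A).Adj x y ↔
      (∃ a b : G.V, x = Sum.inl a ∧ y = Sum.inl b ∧ (G.spanning (prL G W A)).Adj a b) ∨
      (∃ a b : W.V, x = Sum.inr a ∧ y = Sum.inr b ∧ (W.spanning (prR G W A)).Adj a b) := by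
  rw [spanning_adj]
  constructor
  · rintro ⟨hne, e, he, hee⟩
    rcases e with eg | ew
    · obtain ⟨a, b, hab⟩ := sym2_exists_rep (G.ends eg)
      have : (G.disjUnion W).ends (Sum.inl eg) = s(Sum.inl a, Sum.inl b) := by
        show (G.ends eg).map Sum.inl = _
        rw [hab, Sym2.map_pair_eq]
      rw [this] at hee
      rcases Sym2.eq_iff.mp hee with ⟨h1, h2⟩ | ⟨h1, h2⟩
      · refine Or.inl ⟨a, b, h1.symm, h2.symm, (spanning_adj _ _ _ _).mpr
          ⟨?_, eg, (mem_prL G W A eg).mpr he, hab⟩⟩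
        rintro rfl; exact hne (h1.symm ▸ h2.symm ▸ rfl)
      · refine Or.inl ⟨b, a, h2.symm, h1.symm, (spanning_adj _ _ _ _).mpr
          ⟨?_, eg, (mem_prL G W A eg).mpr he, hab.trans Sym2.eq_swap⟩⟩
        rintro rfl; exact hne (h1.symm ▸ h2.symm ▸ rfl)
    · obtain ⟨a, b, hab⟩ := sym2_exists_rep (W.ends ew)
      have : (G.disjUnion W).ends (Sum.inr ew) = s(Sum.inr a, Sum.inr b) := by
        show (W.ends ew).map Sum.inr = _
        rw [hab, Sym2.map_pair_eq]
      rw [this] at hee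
      rcases Sym2.eq_iff.mp hee with ⟨h1, h2⟩ | ⟨h1, h2⟩
      · refine Or.inr ⟨a, b, h1.symm, h2.symm, (spanning_adj _ _ _ _).mpr
          ⟨?_, ew, (mem_prR G W A ew).mpr he, hab⟩⟩
        rintro rfl; exact hne (h1.symm ▸ h2.symm ▸ rfl)
      · refine Or.inr ⟨b, a, h2.symm, h1.symm, (spanning_adj _ _ _ _).mpr
          ⟨?_, ew, (mem_prR G W A ew).mpr he, hab.trans Sym2.eq_swap⟩⟩
        rintro rfl; exact hne (h1.symm ▸ h2.symm ▸ rfl)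
  · rintro (⟨a, b, rfl, rfl, hadj⟩ | ⟨a, b, rfl, rfl, hadj⟩)
    · rw [spanning_adj] at hadj
      obtain ⟨hne, e, he, hee⟩ := hadj
      refine ⟨fun hc => hne (Sum.inl_injective hc), Sum.inl e, (mem_prL G W A e).mp he, ?_⟩
      show (G.ends e).map Sum.inl = _
      rw [hee, Sym2.map_pair_eq]
      rfl
    · rw [spanning_adj] at hadj
      obtain ⟨hne, e, he, hee⟩ := hadj
      refine ⟨fun hc => hne (Sum.inr_injective hc), Sum.inr e, (mem_prR G W A e).mp he, ?_⟩
      show (W.ends e).map Sum.inr = _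
      rw [hee, Sym2.map_pair_eq]
      rfl

/-- closed form for reachability in a disjoint union -/
def duR : (G.disjUnion W).V → (G.disjUnion W).V → Prop := fun x y =>
  match x, y with
  | Sum.inl a, Sum.inl b => (G.spanning (prL G W A)).Reachable a b
  | Sum.inr a, Sum.inr b => (W.spanning (prR G W A)).Reachable a b
  | _, _ => False

lemma duR_refl (x : (G.disjUnion W).V) : duR G W A x x := by
  rcases x with a | a
  · exact (Reachable.refl a : (G.spanning (prL G W A)).Reachable a a)
  · exact (Reachable.refl a : (W.spanning (prR G W A)).Reachable a a)

lemma du_reach {x y : (G.disjUnion W).V} (h : ((G.disjUnion W).spanning A).Reachable x y) :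
    duR G W A x y := by
  obtain ⟨p⟩ := h
  induction p with
  | nil => exact duR_refl G W A _
  | @cons x z y hadj p ih =>
    rcases du_adj G W A x z with ⟨hmp, _⟩
    rcases hmp hadj with ⟨a, b, rfl, rfl, hab⟩ | ⟨a, b, rfl, rfl, hab⟩
    · rcases y with c | c
      · exact hab.reachable.trans ih
      · exact ih.elim
    · rcases y with c | c
      · exact ih.elim
      · exact hab.reachable.trans ih

lemma du_reach_inl {a b : G.V} :
    ((G.disjUnion W).spanning A).Reachable (Sum.inl a) (Sum.inl b) ↔
      (G.spanning (prL G W A)).Reachable a b := by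
  constructor
  · exact fun h => du_reach G W A h
  · refine fun h => reach_map_general Sum.inl (fun c d hcd => Adj.reachable ?_) h
    exact (du_adj G W A _ _).mpr (Or.inl ⟨c, d, rfl, rfl, hcd⟩)

lemma du_reach_inr {a b : W.V} :
    ((G.disjUnion W).spanning A).Reachable (Sum.inr a) (Sum.inr b) ↔
      (W.spanning (prR G W A)).Reachable a b := by
  constructor
  · exact fun h => du_reach G W A h
  · refine fun h => reach_map_general Sum.inr (fun c d hcd => Adj.reachable ?_) h
    exact (du_adj G W A _ _).mpr (Or.inr ⟨c, d, rfl, rfl, hcd⟩)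

lemma du_not_reach_mixed {a : G.V} {b : W.V} :
    ¬ ((G.disjUnion W).spanning A).Reachable (Sum.inl a) (Sum.inr b) :=
  fun h => du_reach G W A h

lemma du_comps : (G.disjUnion W).comps A = G.comps (prL G W A) + W.comps (prR G W A) := by
  rw [Multigraph.comps, Multigraph.comps, Multigraph.comps, ← Nat.card_sum]
  refine Nat.card_congr (Equiv.ofBijective (Quot.lift (fun x =>
    match x with
    | Sum.inl a => (Sum.inl ((G.spanning (prL G W A)).connectedComponentMk a) :
        (G.spanning (prL G W A)).ConnectedComponent ⊕ (W.spanning (prR G W A)).ConnectedComponent)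
    | Sum.inr a => Sum.inr ((W.spanning (prR G W A)).connectedComponentMk a)) ?_) ⟨?_, ?_⟩)
  · intro x y hr
    have hd := du_reach G W A hr
    rcases x with a | a <;> rcases y with b | b
    · exact congrArg Sum.inl (ConnectedComponent.sound hd)
    · exact hd.elim
    · exact hd.elim
    · exact congrArg Sum.inr (ConnectedComponent.sound hd)
  · rintro ⟨x⟩ ⟨y⟩ hxy
    rcases x with a | a <;> rcases y with b | b <;>
      simp only [Sum.inl.injEq, Sum.inr.injEq] at hxy
    · exact Quot.sound ((du_reach_inl G W A).mpr (ConnectedComponent.exact hxy))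
    · exact absurd hxy (by simp)
    · exact absurd hxy (by simp)
    · exact Quot.sound ((du_reach_inr G W A).mpr (ConnectedComponent.exact hxy))
  · rintro (c | c)
    · obtain ⟨a, rfl⟩ := c.exists_rep
      exact ⟨Quot.mk _ (Sum.inl a), rfl⟩
    · obtain ⟨a, rfl⟩ := c.exists_rep
      exact ⟨Quot.mk _ (Sum.inr a), rfl⟩

end DisjU
end StmtAux
namespace StmtAux
open SimpleGraph

section Glue

variable (G W : Multigraph) {k : ℕ} (u : Fin k → G.V) (w : Fin k → W.V)

/-- markers of the disjoint union -/
def mGW : Fin k ⊕ Fin k → (G.disjUnion W).V :=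
  Sum.elim (fun i => Sum.inl (u i)) (fun i => Sum.inr (w i))

/-- the matching relation on marker indices -/
def rhoGW (k : ℕ) : Fin k ⊕ Fin k → Fin k ⊕ Fin k → Prop := fun i j =>
  ∃ t, i = Sum.inl t ∧ j = Sum.inr t

lemma glue_rel_iff : ∀ a b : (G.disjUnion W).V,
    (∃ i : Fin k, a = Sum.inl (u i) ∧ b = Sum.inr (w i)) ↔
      ∃ i j, rhoGW k i j ∧ a = mGW G W u w i ∧ b = mGW G W u w j := by
  intro a b
  constructor
  · rintro ⟨i, rfl, rfl⟩
    exact ⟨Sum.inl i, Sum.inr i, ⟨i, rfl, rfl⟩, rfl, rfl⟩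
  · rintro ⟨i, j, ⟨t, rfl, rfl⟩, rfl, rfl⟩
    exact ⟨t, rfl, rfl⟩

variable (A : Finset (G.disjUnion W).E)

/-- marker partitions -/
noncomputable def pG : Setoid (Fin k) := mpi (G.spanning (prL G W A)) u
noncomputable def pW : Setoid (Fin k) := mpi (W.spanning (prR G W A)) w
noncomputable def pD : Setoid (Fin k ⊕ Fin k) := mpi ((G.disjUnion W).spanning A) (mGW G W u w)

lemma pD_ll {s t : Fin k} : pD G W u w A (Sum.inl s) (Sum.inl t) ↔ pG G W u A s t :=
  du_reach_inl G W A

lemma pD_rr {s t : Fin k} : pD G W u w A (Sum.inr s) (Sum.inr t) ↔ pW G W w A s t :=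
  du_reach_inr G W A

lemma pD_lr {s t : Fin k} : ¬ pD G W u w A (Sum.inl s) (Sum.inr t) :=
  du_not_reach_mixed G W A

lemma pD_rl {s t : Fin k} : ¬ pD G W u w A (Sum.inr s) (Sum.inl t) :=
  fun hc => du_not_reach_mixed G W A (Setoid.symm' _ hc)

lemma card_quot_pD :
    Nat.card (Quotient (pD G W u w A)) =
      Nat.card (Quotient (pG G W u A)) + Nat.card (Quotient (pW G W w A)) := by
  rw [← Nat.card_sum]
  have hF : ∀ (a b : Fin k ⊕ Fin k), pD G W u w A a b →
      (match a with
        | Sum.inl t => (Sum.inl (Quotient.mk (pG G W u A) t) :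
            Quotient (pG G W u A) ⊕ Quotient (pW G W w A))
        | Sum.inr t => Sum.inr (Quotient.mk (pW G W w A) t)) =
      (match b with
        | Sum.inl t => (Sum.inl (Quotient.mk (pG G W u A) t) :
            Quotient (pG G W u A) ⊕ Quotient (pW G W w A))
        | Sum.inr t => Sum.inr (Quotient.mk (pW G W w A) t)) := by
    rintro (a | a) (b | b) hab
    · exact congrArg Sum.inl (Quotient.sound ((pD_ll G W u w A).mp hab))
    · exact absurd hab (pD_lr G W u w A)
    · exact absurd hab (pD_rl G W u w A)
    · exact congrArg Sum.inr (Quotient.sound ((pD_rr G W u w A).mp hab))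
  have h1 : ∀ (a b : Fin k), pG G W u A a b →
      Quotient.mk (pD G W u w A) (Sum.inl a) = Quotient.mk (pD G W u w A) (Sum.inl b) :=
    fun a b hab => Quotient.sound ((pD_ll G W u w A).mpr hab)
  have h2 : ∀ (a b : Fin k), pW G W w A a b →
      Quotient.mk (pD G W u w A) (Sum.inr a) = Quotient.mk (pD G W u w A) (Sum.inr b) :=
    fun a b hab => Quotient.sound ((pD_rr G W u w A).mpr hab)
  refine Nat.card_congr ⟨Quotient.lift _ hF,
    Sum.elim (Quotient.lift _ h1) (Quotient.lift _ h2), ?_, ?_⟩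
  · rintro ⟨a | a⟩ <;> rfl
  · rintro (a | a) <;> [skip; skip] <;>
      (first
        | (induction a using Quotient.ind with
           | _ a => rfl))

lemma card_quot_pD_sup :
    Nat.card (Quotient (pD G W u w A ⊔ Relation.EqvGen.setoid (rhoGW k))) =
      Nat.card (Quotient (pG G W u A ⊔ pW G W w A)) := by
  set S := pD G W u w A ⊔ Relation.EqvGen.setoid (rhoGW k) with hS
  set T := pG G W u A ⊔ pW G W w A with hT
  have hSl : pD G W u w A ≤ S := le_sup_left
  have hSr : Relation.EqvGen.setoid (rhoGW k) ≤ S := le_sup_right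
  have hTl : pG G W u A ≤ T := le_sup_left
  have hTr : pW G W w A ≤ T := le_sup_right
  have hmatch : ∀ t : Fin k, S (Sum.inl t) (Sum.inr t) := fun t =>
    hSr (Relation.EqvGen.rel _ _ ⟨t, rfl, rfl⟩)
  have hF : ∀ (a b : Fin k ⊕ Fin k), S a b →
      (match a with
        | Sum.inl t => Quotient.mk T t
        | Sum.inr t => Quotient.mk T t) =
      (match b with
        | Sum.inl t => Quotient.mk T t
        | Sum.inr t => Quotient.mk T t) := by
    intro a b hab
    have hle : S ≤ Setoid.ker (fun i : Fin k ⊕ Fin k =>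
        match i with
        | Sum.inl t => Quotient.mk T t
        | Sum.inr t => Quotient.mk T t) := by
      refine sup_le ?_ ?_
      · rintro (s | s) (t | t) hst
        · exact Quotient.sound (hTl ((pD_ll G W u w A).mp hst))
        · exact absurd hst (pD_lr G W u w A)
        · exact absurd hst (pD_rl G W u w A)
        · exact Quotient.sound (hTr ((pD_rr G W u w A).mp hst))
      · refine Setoid.eqvGen_le fun x y hxy => ?_
        obtain ⟨t, rfl, rfl⟩ := hxy
        rfl
    exact hle hab
  have hGm : ∀ (a b : Fin k), T a b →
      Quotient.mk S (Sum.inl a) = Quotient.mk S (Sum.inl b) := by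
    intro a b hab
    have hle : T ≤ Setoid.ker (fun t : Fin k => Quotient.mk S (Sum.inl t)) := by
      refine sup_le ?_ ?_
      · intro s t hst
        exact Quotient.sound (hSl ((pD_ll G W u w A).mpr hst))
      · intro s t hst
        refine Quotient.sound ?_
        have h1 : S (Sum.inl s) (Sum.inr s) := hmatch s
        have h2 : S (Sum.inr s) (Sum.inr t) := hSl ((pD_rr G W u w A).mpr hst)
        have h3 : S (Sum.inr t) (Sum.inl t) := Setoid.symm' _ (hmatch t)
        exact Setoid.trans' _ (Setoid.trans' _ h1 h2) h3
    exact hle hab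
  refine Nat.card_congr ⟨Quotient.lift _ hF, Quotient.lift _ hGm, ?_, ?_⟩
  · rintro ⟨a | a⟩
    · rfl
    · exact Quotient.sound (hmatch a)
  · rintro ⟨a⟩
    rfl

/-- component count of the glued graph -/
lemma glue_comps :
    (G.glue W u w).comps A + Nat.card (Quotient (pG G W u A)) +
        Nat.card (Quotient (pW G W w A)) =
      G.comps (prL G W A) + W.comps (prR G W A) +
        Nat.card (Quotient (pG G W u A ⊔ pW G W w A)) := by
  have hm := master (G.disjUnion W) (mGW G W u w) (rhoGW k)
    (fun a b => ∃ i : Fin k, a = Sum.inl (u i) ∧ b = Sum.inr (w i))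
    (glue_rel_iff G W u w) A
  have hgl : (G.glue W u w).comps A =
      ((G.disjUnion W).identify
        (fun a b => ∃ i : Fin k, a = Sum.inl (u i) ∧ b = Sum.inr (w i))).comps A := rfl
  have hJ : J2 (G.disjUnion W) (mGW G W u w) (rhoGW k) A =
      pD G W u w A ⊔ Relation.EqvGen.setoid (rhoGW k) := rfl
  have hpd : mpi ((G.disjUnion W).spanning A) (mGW G W u w) = pD G W u w A := rfl
  rw [hJ, hpd] at hm
  rw [hgl, ← card_quot_pD_sup G W u w A, ← du_comps G W A]
  have hq := card_quot_pD G W u w A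
  omega

end Glue
end StmtAux
namespace StmtAux
open SimpleGraph

section Conn

variable {ι : Type} (G : Multigraph) (m : ι → G.V)

lemma mpi_top (hG : G.Connected) : mpi (G.spanning Finset.univ) m = ⊤ := by
  apply Setoid.ext
  intro i j
  simp only [mpi_rel]
  have := hG.preconnected (m i) (m j)
  constructor
  · intro _; trivial
  · intro _; exact this

lemma comps_univ_conn (hG : G.Connected) : G.comps Finset.univ = 1 := by
  rw [Multigraph.comps, Nat.card_eq_one_iff_unique]
  constructor
  · exact hG.preconnected.subsingleton_connectedComponent
  · obtain ⟨x⟩ := hG.nonempty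
    exact ⟨(G.spanning Finset.univ).connectedComponentMk x⟩

end Conn

section Ident

variable (G : Multigraph) {k : ℕ} (u : Fin k → G.V) (s : Setoid (Fin k))

lemma ident_comps (A : Finset G.E) :
    (G.identify (fun a b => ∃ i j : Fin k, s.r i j ∧ a = u i ∧ b = u j)).comps A +
        Nat.card (Quotient (mpi (G.spanning A) u)) =
      G.comps A + Nat.card (Quotient (mpi (G.spanning A) u ⊔ s)) := by
  have hm := master G u s.r (fun a b => ∃ i j : Fin k, s.r i j ∧ a = u i ∧ b = u j)
    (fun a b => Iff.rfl) A
  have hJ : J2 G u s.r A = mpi (G.spanning A) u ⊔ s := by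
    rw [J2, Setoid.eqvGen_of_setoid]
  rwa [hJ] at hm

lemma ident_cardV (hu : Function.Injective u) :
    Fintype.card (G.identify (fun a b => ∃ i j : Fin k, s.r i j ∧ a = u i ∧ b = u j)).V + k =
      Fintype.card G.V + Nat.card (Quotient s) := by
  have hm := ident_comps G u s (∅ : Finset G.E)
  rw [mpi_empty G hu, bot_sup_eq, comps_empty] at hm
  have hce : (G.identify (fun a b => ∃ i j : Fin k, s.r i j ∧ a = u i ∧ b = u j)).comps
      (∅ : Finset G.E) =
      Fintype.card (G.identify (fun a b => ∃ i j : Fin k, s.r i j ∧ a = u i ∧ b = u j)).V :=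
    comps_empty _
  rw [card_quot_bot, Fintype.card_fin] at hm
  omega

lemma ident_comps_univ (hG : G.Connected) :
    (G.identify (fun a b => ∃ i j : Fin k, s.r i j ∧ a = u i ∧ b = u j)).comps
      Finset.univ = 1 := by
  have hm := ident_comps G u s (Finset.univ : Finset G.E)
  rw [mpi_top G u hG, top_sup_eq, comps_univ_conn G hG] at hm
  exact (by omega : (G.identify (fun a b => ∃ i j : Fin k, s.r i j ∧ a = u i ∧ b = u j)).comps
    (Finset.univ : Finset G.E) = 1)

end Ident

section GlueCard

variable (G W : Multigraph) {k : ℕ} (u : Fin k → G.V) (w : Fin k → W.V)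

lemma prL_empty : prL G W (∅ : Finset (G.disjUnion W).E) = ∅ := by
  ext e; simp [mem_prL]; exact Finset.notMem_empty _

lemma prR_empty : prR G W (∅ : Finset (G.disjUnion W).E) = ∅ := by
  ext e; simp [mem_prR]; exact Finset.notMem_empty _

lemma prL_univ : prL G W (Finset.univ : Finset (G.disjUnion W).E) = Finset.univ := by
  ext e; simp [mem_prL]; exact Finset.mem_univ _

lemma prR_univ : prR G W (Finset.univ : Finset (G.disjUnion W).E) = Finset.univ := by
  ext e; simp [mem_prR]; exact Finset.mem_univ _

lemma glue_cardV (hu : Function.Injective u) (hw : Function.Injective w) :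
    Fintype.card (G.glue W u w).V + k = Fintype.card G.V + Fintype.card W.V := by
  have hm := glue_comps G W u w (∅ : Finset (G.disjUnion W).E)
  rw [show pG G W u (∅ : Finset (G.disjUnion W).E) = ⊥ by
      rw [pG, prL_empty]; exact mpi_empty G hu,
    show pW G W w (∅ : Finset (G.disjUnion W).E) = ⊥ by
      rw [pW, prR_empty]; exact mpi_empty W hw,
    bot_sup_eq, prL_empty, prR_empty, comps_empty G, comps_empty W] at hm
  rw [card_quot_bot, Fintype.card_fin] at hm
  have hce : (G.glue W u w).comps (∅ : Finset (G.disjUnion W).E) =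
      Fintype.card (G.glue W u w).V := comps_empty _
  omega

lemma glue_comps_univ (hG : G.Connected) :
    (G.glue W u w).comps (Finset.univ : Finset (G.disjUnion W).E) +
        Nat.card (Quotient (mpi (W.spanning Finset.univ) w)) =
      W.comps Finset.univ + 1 := by
  have hm := glue_comps G W u w (Finset.univ : Finset (G.disjUnion W).E)
  rw [show pG G W u (Finset.univ : Finset (G.disjUnion W).E) = ⊤ by
      rw [pG, prL_univ]; exact mpi_top G u hG,
    top_sup_eq, prL_univ, prR_univ, comps_univ_conn G hG] at hm
  have hpw : pW G W w (Finset.univ : Finset (G.disjUnion W).E) =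
      mpi (W.spanning Finset.univ) w := by rw [pW, prR_univ]
  rw [hpw] at hm
  omega

end GlueCard
end StmtAux
namespace StmtAux
open MvPolynomial

/-- the Whitney-style normalized sum -/
noncomputable def wpoly (P : Multigraph) : MvPolynomial (Fin 2) ℤ :=
  ∑ A : Finset P.E,
    (X 0 - 1) ^ (P.comps A) * (X 1 - 1) ^ (A.card + P.comps A)

lemma tutte_norm (P : Multigraph) :
    P.tutte * ((X 0 - 1) ^ (P.comps Finset.univ) * (X 1 - 1) ^ (Fintype.card P.V)) =
      wpoly P := by
  rw [Multigraph.tutte, wpoly, Finset.sum_mul]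
  refine Finset.sum_congr rfl fun A _ => ?_
  have h1 : P.comps A ≤ Fintype.card P.V := comps_le_card P A
  have h2 : P.comps Finset.univ ≤ P.comps A := comps_mono P (Finset.subset_univ A)
  have h3 : Fintype.card P.V ≤ A.card + P.comps A := card_le_card_add_comps P A
  have hre : ∀ a b : MvPolynomial (Fin 2) ℤ, ∀ n1 n2 n3 n4 : ℕ,
      a ^ n1 * b ^ n2 * (a ^ n3 * b ^ n4) = a ^ (n1 + n3) * b ^ (n2 + n4) := by
    intro a b n1 n2 n3 n4
    rw [pow_add, pow_add]; ring
  rw [hre]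
  congr 1
  · congr 1
    rw [Multigraph.rk, Multigraph.rk]
    omega
  · congr 1
    rw [Multigraph.rk]
    omega

lemma X_sub_one_ne_zero (i : Fin 2) : (X i - 1 : MvPolynomial (Fin 2) ℤ) ≠ 0 := by
  intro hc
  have := congrArg (eval (fun _ => 0)) hc
  simp at this

lemma tutte_eq_of_wpoly_eq (P Q : Multigraph)
    (hc : P.comps Finset.univ = Q.comps Finset.univ)
    (hn : Fintype.card P.V = Fintype.card Q.V)
    (hw : wpoly P = wpoly Q) : P.tutte = Q.tutte := by
  have h1 := tutte_norm P
  have h2 := tutte_norm Q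
  rw [hc, hn] at h1
  rw [← hw, ← h1] at h2
  exact mul_right_cancel₀ (mul_ne_zero (pow_ne_zero _ (X_sub_one_ne_zero 0))
    (pow_ne_zero _ (X_sub_one_ne_zero 1))) h2.symm

/-- extraction of the vertex count from the Tutte polynomial of a connected graph -/
lemma card_eq_of_tutte_eq (P Q : Multigraph)
    (hPc : P.comps Finset.univ = 1) (hQc : Q.comps Finset.univ = 1)
    (ht : P.tutte = Q.tutte) : Fintype.card P.V = Fintype.card Q.V := by
  classical
  set φ : MvPolynomial (Fin 2) ℤ →ₐ[ℤ] Polynomial ℤ :=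
    aeval (fun i : Fin 2 => if i = 0 then Polynomial.X + 1 else 2) with hφ
  have key : ∀ R : Multigraph, R.comps Finset.univ = 1 →
      (φ R.tutte).natDegree = Fintype.card R.V - 1 := by
    intro R hRc
    have himg : φ R.tutte = ∑ A : Finset R.E,
        (Polynomial.X : Polynomial ℤ) ^ (R.rk Finset.univ - R.rk A) := by
      rw [Multigraph.tutte, map_sum]
      refine Finset.sum_congr rfl fun A _ => ?_
      rw [map_mul, map_pow, map_pow, map_sub, map_sub, hφ]
      simp only [aeval_X, if_pos rfl, map_one]
      norm_num
    have hrk : R.rk Finset.univ = Fintype.card R.V - 1 := by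
      rw [Multigraph.rk, hRc]
    have hcoeff : (φ R.tutte).coeff (R.rk Finset.univ) ≠ 0 := by
      rw [himg, Polynomial.finset_sum_coeff]
      have hterm : ∀ A : Finset R.E,
          ((Polynomial.X : Polynomial ℤ) ^ (R.rk Finset.univ - R.rk A)).coeff
            (R.rk Finset.univ) = if R.rk Finset.univ - R.rk A = R.rk Finset.univ
              then 1 else 0 := by
        intro A
        rw [Polynomial.coeff_X_pow]
        exact if_congr eq_comm rfl rfl
      rw [Finset.sum_congr rfl (fun A _ => hterm A)]
      have hpos : (0:ℤ) < ∑ A : Finset R.E, if R.rk Finset.univ - R.rk A = R.rk Finset.univ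
          then (1:ℤ) else 0 := by
        refine Finset.sum_pos' (fun A _ => by positivity) ⟨∅, Finset.mem_univ _, ?_⟩
        have h0 : R.rk (∅ : Finset R.E) = 0 := by
          rw [Multigraph.rk, comps_empty]
          omega
        rw [h0, Nat.sub_zero, if_pos rfl]
        norm_num
      exact ne_of_gt hpos
    have hdegle : (φ R.tutte).natDegree ≤ R.rk Finset.univ := by
      rw [himg]
      refine Polynomial.natDegree_sum_le_of_forall_le _ _ fun A _ => ?_
      refine (Polynomial.natDegree_X_pow_le _).trans ?_
      exact Nat.sub_le _ _
    have := Polynomial.le_natDegree_of_ne_zero hcoeff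
    omega
  have hP := key P hPc
  have hQ := key Q hQc
  rw [ht] at hP
  have hP1 : 1 ≤ Fintype.card P.V := hPc ▸ comps_le_card P Finset.univ
  have hQ1 : 1 ≤ Fintype.card Q.V := hQc ▸ comps_le_card Q Finset.univ
  omega

end StmtAux
namespace StmtAux

section Join
variable (G W : Multigraph)

noncomputable def joinE (B : Finset G.E) (C : Finset W.E) : Finset (G.disjUnion W).E :=
  (B.map ⟨Sum.inl, Sum.inl_injective⟩ ∪ C.map ⟨Sum.inr, Sum.inr_injective⟩ :
    Finset (G.E ⊕ W.E))

lemma prL_joinE (B : Finset G.E) (C : Finset W.E) : prL G W (joinE G W B C) = B := by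
  ext e
  rw [mem_prL]
  show Sum.inl e ∈ (B.map ⟨Sum.inl, Sum.inl_injective⟩ ∪ C.map ⟨Sum.inr, Sum.inr_injective⟩ :
    Finset (G.E ⊕ W.E)) ↔ _
  simp

lemma prR_joinE (B : Finset G.E) (C : Finset W.E) : prR G W (joinE G W B C) = C := by
  ext e
  rw [mem_prR]
  show Sum.inr e ∈ (B.map ⟨Sum.inl, Sum.inl_injective⟩ ∪ C.map ⟨Sum.inr, Sum.inr_injective⟩ :
    Finset (G.E ⊕ W.E)) ↔ _
  simp

lemma joinE_card (B : Finset G.E) (C : Finset W.E) :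
    (joinE G W B C).card = B.card + C.card := by
  show (B.map ⟨Sum.inl, Sum.inl_injective⟩ ∪ C.map ⟨Sum.inr, Sum.inr_injective⟩ :
    Finset (G.E ⊕ W.E)).card = _
  rw [Finset.card_union_of_disjoint, Finset.card_map, Finset.card_map]
  simp only [Finset.disjoint_left, Finset.mem_map, Function.Embedding.coeFn_mk]
  rintro x ⟨a, _, rfl⟩ ⟨b, _, hb⟩
  exact Sum.inl_ne_inr hb.symm

lemma joinE_pr (A : Finset (G.disjUnion W).E) :
    joinE G W (prL G W A) (prR G W A) = A := by
  ext e
  show @Membership.mem (G.E ⊕ W.E) (Finset (G.E ⊕ W.E)) _ ((prL G W A).map ⟨Sum.inl, Sum.inl_injective⟩ ∪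
    (prR G W A).map ⟨Sum.inr, Sum.inr_injective⟩ : Finset (G.E ⊕ W.E)) e ↔ e ∈ A
  rcases e with e | e <;>
    simp only [joinE, Finset.mem_union, Finset.mem_map, Function.Embedding.coeFn_mk,
      mem_prL, mem_prR]
  · constructor
    · rintro (⟨a, ha, hae⟩ | ⟨a, _, hae⟩)
      · cases Sum.inl_injective hae; exact ha
      · exact absurd hae (by simp)
    · intro hA
      exact Or.inl ⟨e, hA, rfl⟩
  · constructor
    · rintro (⟨a, _, hae⟩ | ⟨a, ha, hae⟩)
      · exact absurd hae (by simp)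
      · cases Sum.inr_injective hae; exact ha
    · intro hA
      exact Or.inr ⟨e, hA, rfl⟩

lemma joinE_bij :
    Function.Bijective (fun BC : Finset G.E × Finset W.E => joinE G W BC.1 BC.2) := by
  constructor
  · rintro ⟨B1, C1⟩ ⟨B2, C2⟩ hBC
    have h1 := congrArg (prL G W) hBC
    have h2 := congrArg (prR G W) hBC
    rw [prL_joinE, prL_joinE] at h1
    rw [prR_joinE, prR_joinE] at h2
    exact Prod.ext h1 h2
  · intro A
    exact ⟨(prL G W A, prR G W A), joinE_pr G W A⟩

lemma sum_du {M : Type} [AddCommMonoid M] (f : Finset (G.disjUnion W).E → M) :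
    ∑ A : Finset (G.disjUnion W).E, f A =
      ∑ B : Finset G.E, ∑ C : Finset W.E, f (joinE G W B C) := by
  have h1 : ∑ BC : Finset G.E × Finset W.E, f (joinE G W BC.1 BC.2) =
      ∑ A : Finset (G.disjUnion W).E, f A :=
    Fintype.sum_bijective _ (joinE_bij G W)
      (fun BC : Finset G.E × Finset W.E => f (joinE G W BC.1 BC.2)) f (fun _ => rfl)
  rw [← h1, Fintype.sum_prod_type]

end Join
end StmtAux
namespace StmtAux
open MvPolynomial

section GlueW

variable (G W : Multigraph) {k : ℕ} (u : Fin k → G.V) (w : Fin k → W.V)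

/-- the setoid induced on markers by an edge subset of `W` -/
noncomputable def sW (C : Finset W.E) : Setoid (Fin k) := mpi (W.spanning C) w

/-- the corresponding identified graph `G(s)` -/
noncomputable def GId (s : Setoid (Fin k)) : Multigraph :=
  G.identify (fun a b => ∃ i j : Fin k, s.r i j ∧ a = u i ∧ b = u j)

lemma glue_comps_split (B : Finset G.E) (C : Finset W.E) :
    (G.glue W u w).comps (joinE G W B C) =
      (GId G u (sW W w C)).comps B +
        (W.comps C - Nat.card (Quotient (sW W w C))) := by
  have hg := glue_comps G W u w (joinE G W B C)
  have hpG : pG G W u (joinE G W B C) = mpi (G.spanning B) u := by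
    rw [pG, prL_joinE]
  have hpW : pW G W w (joinE G W B C) = sW W w C := by
    rw [pW, prR_joinE, sW]
  rw [hpG, hpW, prL_joinE, prR_joinE] at hg
  have hi := ident_comps G u (sW W w C) B
  have hle : Nat.card (Quotient (sW W w C)) ≤ W.comps C := quot_mpi_le_comps W C w
  have hgid : (GId G u (sW W w C)).comps B =
      (G.identify (fun a b => ∃ i j : Fin k, (sW W w C).r i j ∧ a = u i ∧ b = u j)).comps B :=
    rfl
  rw [hgid]
  omega

lemma wpoly_glue :
    wpoly (G.glue W u w) = ∑ C : Finset W.E,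
      ((X 0 - 1) ^ (W.comps C - Nat.card (Quotient (sW W w C))) *
        (X 1 - 1) ^ (C.card + (W.comps C - Nat.card (Quotient (sW W w C)))) *
          wpoly (GId G u (sW W w C))) := by
  have h0 : wpoly (G.glue W u w) = ∑ A : Finset (G.disjUnion W).E,
      (X 0 - 1) ^ ((G.glue W u w).comps A) *
        (X 1 - 1) ^ (A.card + (G.glue W u w).comps A) := rfl
  rw [h0, sum_du G W, Finset.sum_comm]
  refine Finset.sum_congr rfl fun C _ => ?_
  have hwp : wpoly (GId G u (sW W w C)) = ∑ B : Finset G.E,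
      (X 0 - 1) ^ ((GId G u (sW W w C)).comps B) *
        (X 1 - 1) ^ (B.card + (GId G u (sW W w C)).comps B) := rfl
  rw [hwp, Finset.mul_sum]
  refine Finset.sum_congr rfl fun B _ => ?_
  rw [glue_comps_split G W u w B C, joinE_card G W B C]
  set c1 := (GId G u (sW W w C)).comps B
  set d := W.comps C - Nat.card (Quotient (sW W w C))
  have he : B.card + C.card + (c1 + d) = (C.card + d) + (B.card + c1) := by ring
  rw [he, pow_add (X 1 - 1) (C.card + d) (B.card + c1), pow_add (X 0 - 1) c1 d,
    pow_add (X 1 - 1) C.card d, pow_add (X 1 - 1) B.card c1]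
  ring

end GlueW
end StmtAux
/-- if `G(P)` and `H(P)` are T-equivalent for every partition `P`
of the index set (identifying the distinguished vertices along the blocks),
then the gluings of `G` and `H` to any graph `W` are T-equivalent. -/
theorem stmt_8 (G H W : Multigraph) {k : ℕ}
    (u : Fin k → G.V) (v : Fin k → H.V) (w : Fin k → W.V)
    (hu : Function.Injective u) (hv : Function.Injective v) (hw : Function.Injective w)
    (hG : G.Connected) (hH : H.Connected)
    (h : ∀ s : Setoid (Fin k),
      (G.identify (fun a b => ∃ i j : Fin k, s.r i j ∧ a = u i ∧ b = u j)).tutte =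
        (H.identify (fun a b => ∃ i j : Fin k, s.r i j ∧ a = v i ∧ b = v j)).tutte) :
    (G.glue W u w).tutte = (H.glue W v w).tutte := by
  classical
  open StmtAux in
  -- the vertex counts of `G` and `H` agree
  have hn : Fintype.card G.V = Fintype.card H.V := by
    have hc1 := ident_comps_univ G u ⊥ hG
    have hc2 := ident_comps_univ H v ⊥ hH
    have hcard := card_eq_of_tutte_eq _ _ hc1 hc2 (h ⊥)
    have hv1 := ident_cardV G u ⊥ hu
    have hv2 := ident_cardV H v ⊥ hv
    omega
  -- the normalized polynomials of `G(s)` and `H(s)` agree for every `s`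
  have hwp : ∀ s : Setoid (Fin k), wpoly (GId G u s) = wpoly (GId H v s) := by
    intro s
    have hc1 := ident_comps_univ G u s hG
    have hc2 := ident_comps_univ H v s hH
    have hv1 := ident_cardV G u s hu
    have hv2 := ident_cardV H v s hv
    have hcV : Fintype.card (GId G u s).V = Fintype.card (GId H v s).V := by
      have e1 : Fintype.card (GId G u s).V =
          Fintype.card (G.identify (fun a b => ∃ i j : Fin k, s.r i j ∧ a = u i ∧ b = u j)).V :=
        rfl
      have e2 : Fintype.card (GId H v s).V =
          Fintype.card (H.identify (fun a b => ∃ i j : Fin k, s.r i j ∧ a = v i ∧ b = v j)).V :=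
        rfl
      omega
    have hcC : (GId G u s).comps Finset.univ = (GId H v s).comps Finset.univ := by
      have e1 : (GId G u s).comps Finset.univ =
          (G.identify (fun a b => ∃ i j : Fin k, s.r i j ∧ a = u i ∧ b = u j)).comps
            Finset.univ := rfl
      have e2 : (GId H v s).comps Finset.univ =
          (H.identify (fun a b => ∃ i j : Fin k, s.r i j ∧ a = v i ∧ b = v j)).comps
            Finset.univ := rfl
      omega
    have ht : (GId G u s).tutte = (GId H v s).tutte := h s
    rw [← tutte_norm (GId G u s), ← tutte_norm (GId H v s), ht, hcC, hcV]
  -- the normalized polynomials of the gluings agree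
  have hwpg : wpoly (G.glue W u w) = wpoly (H.glue W v w) := by
    rw [wpoly_glue G W u w, wpoly_glue H W v w]
    exact Finset.sum_congr rfl fun C _ => by rw [hwp (sW W w C)]
  -- conclude
  refine tutte_eq_of_wpoly_eq _ _ ?_ ?_ hwpg
  · have hg1 := glue_comps_univ G W u w hG
    have hg2 := glue_comps_univ H W v w hH
    have e1 : (G.glue W u w).comps Finset.univ =
        (G.glue W u w).comps (Finset.univ : Finset (G.disjUnion W).E) := rfl
    have e2 : (H.glue W v w).comps Finset.univ =
        (H.glue W v w).comps (Finset.univ : Finset (H.disjUnion W).E) := rfl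
    omega
  · have hg1 := glue_cardV G W u w hu hw
    have hg2 := glue_cardV H W v w hv hw
    omega
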